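/- For n-qubit Pauli strings P₁, P₂, P₃ and d = 2^n, the sum over all triples of Tr[(P₁P₂P₃)^k] equals d²·5^n if k is odd, d^7 if k ≡ 0 (mod 4), and d^5 if k is even but not divisible by 4. Equivalently, the sum equals (50 + 30(-1)^k + 48cos(πk/2))^n. -/

import Mathlib

open Matrix Complex

noncomputable def pauli : Fin 4 → Matrix (Fin 2) (Fin 2) ℂ :=
  ![1, !![0, 1; 1, 0], !![0, -Complex.I; Complex.I, 0], !![1, 0; 0, -1]]

def tbl : Fin 4 → Fin 4 → Fin 4 := ![![0,1,2,3],![1,0,3,2],![2,3,0,1],![3,2,1,0]]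

noncomputable def ph : Fin 4 → Fin 4 → ℂ :=
  ![![1,1,1,1],![1,1,Complex.I,-Complex.I],![1,-Complex.I,1,Complex.I],![1,Complex.I,-Complex.I,1]]

lemma one_fix : (1 : Matrix (Fin 2) (Fin 2) ℂ) = !![1,0;0,1] := by
  ext i j; fin_cases i <;> fin_cases j <;> simp [Matrix.one_apply]

lemma pauli_sq (a : Fin 4) : pauli a * pauli a = 1 := by
  fin_cases a <;> ext i j <;> fin_cases i <;> fin_cases j <;>
    simp [pauli, one_fix, Matrix.mul_apply, Fin.sum_univ_succ, Complex.ext_iff]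

lemma mul_tbl (a b : Fin 4) : pauli a * pauli b = ph a b • pauli (tbl a b) := by
  fin_cases a <;> fin_cases b <;> ext i j <;> fin_cases i <;> fin_cases j <;>
    simp [pauli, one_fix, tbl, ph, Matrix.mul_apply, Fin.sum_univ_succ, Matrix.vecHead, Matrix.vecTail, Complex.ext_iff]

lemma tr_pauli (a : Fin 4) : Matrix.trace (pauli a) = if a = 0 then 2 else 0 := by
  fin_cases a <;> norm_num [pauli, one_fix, Matrix.trace, Fin.sum_univ_succ, Matrix.diag, Fin.ext_iff]

lemma I4 : Complex.I ^ 4 = 1 := by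
  rw [show (4:ℕ) = 2*2 from rfl, pow_mul]; norm_num [Complex.I_sq]

lemma nI4 : (-Complex.I) ^ 4 = 1 := by
  rw [neg_pow]; norm_num [I4]

lemma ph4 (a b : Fin 4) : (ph a b) ^ 4 = 1 := by
  fin_cases a <;> fin_cases b <;>
    norm_num [ph, Matrix.vecHead, Matrix.vecTail, I4, nI4]

lemma triple (a b c : Fin 4) :
    pauli a * pauli b * pauli c = (ph a b * ph (tbl a b) c) • pauli (tbl (tbl a b) c) := by
  rw [mul_tbl a b, smul_mul_assoc, mul_tbl, smul_smul]

lemma pow_mod {M : Type*} [Monoid M] {X : M} {p : ℕ} (h : X ^ p = 1) (k : ℕ) :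
    X ^ k = X ^ (k % p) := by
  conv_lhs => rw [← Nat.div_add_mod k p]
  rw [pow_add, pow_mul, h, one_pow, one_mul]

lemma pauli_pow4 (a : Fin 4) : pauli a ^ 4 = 1 := by
  rw [show (4:ℕ) = 2*2 from rfl, pow_mul, sq (pauli a), pauli_sq, one_pow]

lemma triple_pow4 (a b c : Fin 4) : (pauli a * pauli b * pauli c) ^ 4 = 1 := by
  rw [triple, smul_pow, mul_pow, ph4, ph4, pauli_pow4, one_mul, one_smul]

noncomputable def S (k : ℕ) : ℂ :=
  ∑ a : Fin 4, ∑ b : Fin 4, ∑ c : Fin 4, Matrix.trace ((pauli a * pauli b * pauli c) ^ k)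

lemma S_mod (k : ℕ) : S k = S (k % 4) := by
  unfold S
  refine Finset.sum_congr rfl fun a _ => Finset.sum_congr rfl fun b _ =>
    Finset.sum_congr rfl fun c _ => ?_
  rw [pow_mod (triple_pow4 a b c)]

lemma S0 : S 0 = 128 := by
  simp [S, Matrix.trace_one]
  norm_num

open Fin.NatCast in
lemma three_ne : ((3:ℕ) : Fin 4) ≠ 0 := by decide

lemma three_ne' : (3 : Fin 4) ≠ 0 := by decide

lemma v3 : ((3 : Fin 4) : ℕ) = 3 := by decide

lemma S1 : S 1 = 20 := by
  have : ∀ a b c : Fin 4, Matrix.trace ((pauli a * pauli b * pauli c) ^ 1) =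
      (ph a b * ph (tbl a b) c) * (if tbl (tbl a b) c = 0 then 2 else 0) := by
    intro a b c; rw [pow_one, triple, Matrix.trace_smul, tr_pauli, smul_eq_mul]
  simp only [S, this]
  simp only [Fin.sum_univ_four, ph, tbl, Matrix.cons_val]; norm_num [Fin.ext_iff]
  ring

lemma S2 : S 2 = 32 := by
  have : ∀ a b c : Fin 4, Matrix.trace ((pauli a * pauli b * pauli c) ^ 2) =
      (ph a b * ph (tbl a b) c) ^ 2 * 2 := by
    intro a b c
    rw [triple, smul_pow, sq (pauli (tbl (tbl a b) c)), pauli_sq, Matrix.trace_smul,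
      Matrix.trace_one, smul_eq_mul, sq]
    norm_num
  simp only [S, this]
  simp only [Fin.sum_univ_four, ph, tbl, Matrix.cons_val]; norm_num [Complex.I_sq, Fin.ext_iff]

lemma S3 : S 3 = 20 := by
  have : ∀ a b c : Fin 4, Matrix.trace ((pauli a * pauli b * pauli c) ^ 3) =
      (ph a b * ph (tbl a b) c) ^ 3 * (if tbl (tbl a b) c = 0 then 2 else 0) := by
    intro a b c
    have h3 : pauli (tbl (tbl a b) c) ^ 3 = pauli (tbl (tbl a b) c) := by
      rw [pow_succ, sq (pauli (tbl (tbl a b) c)), pauli_sq, one_mul]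
    rw [triple, smul_pow, h3, Matrix.trace_smul, tr_pauli, smul_eq_mul]
  simp only [S, this]
  simp only [Fin.sum_univ_four, ph, tbl, Matrix.cons_val]; norm_num [pow_succ, Complex.I_sq, Fin.ext_iff]
  ring

noncomputable def pauliString (n : ℕ) (a : Fin n → Fin 4) :
    Matrix (Fin n → Fin 2) (Fin n → Fin 2) ℂ :=
  Matrix.of fun i j => ∏ t, pauli (a t) (i t) (j t)

noncomputable def tens {n : ℕ} (M : Fin n → Matrix (Fin 2) (Fin 2) ℂ) :
    Matrix (Fin n → Fin 2) (Fin n → Fin 2) ℂ :=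
  Matrix.of fun i j => ∏ t, M t (i t) (j t)

lemma tens_mul {n : ℕ} (M N : Fin n → Matrix (Fin 2) (Fin 2) ℂ) :
    tens M * tens N = tens fun t => M t * N t := by
  ext i j
  simp only [tens, Matrix.mul_apply, Matrix.of_apply]
  conv_rhs => rw [Finset.prod_univ_sum]
  rw [Fintype.piFinset_univ]
  exact Finset.sum_congr rfl fun l _ => Finset.prod_mul_distrib.symm

lemma tens_one {n : ℕ} : (tens fun _ : Fin n => (1 : Matrix (Fin 2) (Fin 2) ℂ)) = 1 := by
  ext i j
  by_cases h : i = j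
  · subst h; simp [tens, Matrix.one_apply]
  · obtain ⟨t, ht⟩ := Function.ne_iff.mp h
    rw [Matrix.one_apply_ne h]
    exact Finset.prod_eq_zero (Finset.mem_univ t) (Matrix.one_apply_ne ht)

lemma tens_pow {n : ℕ} (M : Fin n → Matrix (Fin 2) (Fin 2) ℂ) (k : ℕ) :
    tens M ^ k = tens fun t => M t ^ k := by
  induction k with
  | zero => simp only [pow_zero]; exact tens_one.symm
  | succ k ih => simp only [pow_succ, ih, tens_mul]

lemma trace_tens {n : ℕ} (M : Fin n → Matrix (Fin 2) (Fin 2) ℂ) :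
    Matrix.trace (tens M) = ∏ t, Matrix.trace (M t) := by
  simp only [Matrix.trace, Matrix.diag, tens, Matrix.of_apply]
  rw [Finset.prod_univ_sum, Fintype.piFinset_univ]

lemma pauliString_tens {n : ℕ} (a : Fin n → Fin 4) :
    pauliString n a = tens fun t => pauli (a t) := rfl

lemma sum_pi_prod {n : ℕ} (h : Fin n → Fin 4 → ℂ) :
    ∑ c : Fin n → Fin 4, ∏ t, h t (c t) = ∏ t, ∑ z, h t z := by
  rw [Finset.prod_univ_sum, Fintype.piFinset_univ]

lemma key (n k : ℕ) :
    (∑ a : Fin n → Fin 4, ∑ b : Fin n → Fin 4, ∑ c : Fin n → Fin 4,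
        Matrix.trace ((pauliString n a * pauliString n b * pauliString n c) ^ k)) = S k ^ n := by
  have step : ∀ a b c : Fin n → Fin 4,
      Matrix.trace ((pauliString n a * pauliString n b * pauliString n c) ^ k) =
        ∏ t, Matrix.trace ((pauli (a t) * pauli (b t) * pauli (c t)) ^ k) := by
    intro a b c
    rw [pauliString_tens, pauliString_tens, pauliString_tens, tens_mul, tens_mul, tens_pow,
      trace_tens]
  calc (∑ a : Fin n → Fin 4, ∑ b : Fin n → Fin 4, ∑ c : Fin n → Fin 4,
        Matrix.trace ((pauliString n a * pauliString n b * pauliString n c) ^ k))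
      = ∑ a : Fin n → Fin 4, ∑ b : Fin n → Fin 4, ∏ t, ∑ z : Fin 4,
          Matrix.trace ((pauli (a t) * pauli (b t) * pauli z) ^ k) := by
        refine Finset.sum_congr rfl fun a _ => Finset.sum_congr rfl fun b _ => ?_
        rw [← sum_pi_prod fun t z => Matrix.trace ((pauli (a t) * pauli (b t) * pauli z) ^ k)]
        exact Finset.sum_congr rfl fun c _ => step a b c
    _ = ∑ a : Fin n → Fin 4, ∏ t, ∑ y : Fin 4, ∑ z : Fin 4,
          Matrix.trace ((pauli (a t) * pauli y * pauli z) ^ k) := by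
        refine Finset.sum_congr rfl fun a _ => ?_
        exact sum_pi_prod fun t y => ∑ z : Fin 4, Matrix.trace ((pauli (a t) * pauli y * pauli z) ^ k)
    _ = ∏ t : Fin n, ∑ x : Fin 4, ∑ y : Fin 4, ∑ z : Fin 4,
          Matrix.trace ((pauli x * pauli y * pauli z) ^ k) :=
        sum_pi_prod fun t x => ∑ y : Fin 4, ∑ z : Fin 4,
          Matrix.trace ((pauli x * pauli y * pauli z) ^ k)
    _ = S k ^ n := by rw [Finset.prod_const, Finset.card_univ, Fintype.card_fin]; rfl

theorem pauli_string_triple_trace_power_sum (n k : ℕ) (hk : 1 ≤ k) :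
    (Odd k →
      (∑ a : Fin n → Fin 4, ∑ b : Fin n → Fin 4, ∑ c : Fin n → Fin 4,
          Matrix.trace ((pauliString n a * pauliString n b * pauliString n c) ^ k)) =
        ((2 : ℂ) ^ n) ^ 2 * (5 : ℂ) ^ n) ∧
    (4 ∣ k →
      (∑ a : Fin n → Fin 4, ∑ b : Fin n → Fin 4, ∑ c : Fin n → Fin 4,
          Matrix.trace ((pauliString n a * pauliString n b * pauliString n c) ^ k)) =
        ((2 : ℂ) ^ n) ^ 7) ∧
    (Even k → ¬ (4 ∣ k) →
      (∑ a : Fin n → Fin 4, ∑ b : Fin n → Fin 4, ∑ c : Fin n → Fin 4,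
          Matrix.trace ((pauliString n a * pauliString n b * pauliString n c) ^ k)) =
        ((2 : ℂ) ^ n) ^ 5) ∧
    (∑ a : Fin n → Fin 4, ∑ b : Fin n → Fin 4, ∑ c : Fin n → Fin 4,
        Matrix.trace ((pauliString n a * pauliString n b * pauliString n c) ^ k)) =
      (((50 + 30 * (-1 : ℝ) ^ k + 48 * Real.cos (Real.pi * k / 2)) ^ n : ℝ) : ℂ) := by
  have hkey := key n k
  have hS := S_mod k
  have pow2 : ∀ m : ℕ, ((2:ℂ)^n)^m = ((2:ℂ)^m)^n := fun m => by
    rw [← pow_mul, mul_comm, pow_mul]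
  have hcast : (k:ℝ) = 4 * (k / 4 : ℕ) + (k % 4 : ℕ) := by
    exact_mod_cast (Nat.div_add_mod k 4).symm
  have hcos : Real.cos (Real.pi * k / 2) = Real.cos (Real.pi * ((k % 4 : ℕ)) / 2) := by
    rw [show Real.pi * k / 2 = Real.pi * ((k % 4 : ℕ)) / 2 + (k / 4 : ℕ) * (2 * Real.pi) by
      rw [hcast]; ring]
    exact Real.cos_add_nat_mul_two_pi _ _
  have h4 : k % 4 = 0 ∨ k % 4 = 1 ∨ k % 4 = 2 ∨ k % 4 = 3 := by omega
  rcases h4 with hr | hr | hr | hr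
  · rw [hr] at hS
    have hSk : S k = 128 := by rw [hS, S0]
    have hneg : (-1:ℝ)^k = 1 := Even.neg_one_pow (Nat.even_iff.mpr (by omega))
    have hcos0 : Real.cos (Real.pi * k / 2) = 1 := by
      rw [hcos, hr]; push_cast; norm_num
    refine ⟨fun hodd => absurd (Nat.odd_iff.mp hodd) (by omega),
      fun _ => by rw [hkey, hSk, pow2]; norm_num,
      fun _ hnd => absurd (Nat.dvd_of_mod_eq_zero hr) hnd, ?_⟩
    rw [hkey, hSk, hneg, hcos0]; push_cast; norm_num
  · rw [hr] at hS
    have hSk : S k = 20 := by rw [hS, S1]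
    have hneg : (-1:ℝ)^k = -1 := Odd.neg_one_pow (Nat.odd_iff.mpr (by omega))
    have hcos0 : Real.cos (Real.pi * k / 2) = 0 := by
      rw [hcos, hr, show Real.pi * (((1:ℕ):ℕ):ℝ) / 2 = Real.pi / 2 by push_cast; ring]
      exact Real.cos_pi_div_two
    refine ⟨fun _ => by rw [hkey, hSk, pow2, ← mul_pow]; norm_num,
      fun hd => by obtain ⟨m, rfl⟩ := hd; omega,
      fun he _ => absurd (Nat.even_iff.mp he) (by omega), ?_⟩
    rw [hkey, hSk, hneg, hcos0]; push_cast; norm_num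
  · rw [hr] at hS
    have hSk : S k = 32 := by rw [hS, S2]
    have hneg : (-1:ℝ)^k = 1 := Even.neg_one_pow (Nat.even_iff.mpr (by omega))
    have hcos0 : Real.cos (Real.pi * k / 2) = -1 := by
      rw [hcos, hr, show Real.pi * (((2:ℕ):ℕ):ℝ) / 2 = Real.pi by push_cast; ring]
      exact Real.cos_pi
    refine ⟨fun hodd => absurd (Nat.odd_iff.mp hodd) (by omega),
      fun hd => by obtain ⟨m, rfl⟩ := hd; omega,
      fun _ _ => by rw [hkey, hSk, pow2]; norm_num, ?_⟩
    rw [hkey, hSk, hneg, hcos0]; push_cast; norm_num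
  · rw [hr] at hS
    have hSk : S k = 20 := by rw [hS, S3]
    have hneg : (-1:ℝ)^k = -1 := Odd.neg_one_pow (Nat.odd_iff.mpr (by omega))
    have hcos0 : Real.cos (Real.pi * k / 2) = 0 := by
      rw [hcos, hr, show Real.pi * (((3:ℕ):ℕ):ℝ) / 2 = Real.pi / 2 + Real.pi by push_cast; ring,
        Real.cos_add_pi, Real.cos_pi_div_two, neg_zero]
    refine ⟨fun _ => by rw [hkey, hSk, pow2, ← mul_pow]; norm_num,
      fun hd => by obtain ⟨m, rfl⟩ := hd; omega,
      fun he _ => absurd (Nat.even_iff.mp he) (by omega), ?_⟩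
    rw [hkey, hSk, hneg, hcos0]; push_cast; norm_num
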